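/- Let J = Σ_{n≥0}(a_n(x)/n!)D^n with deg a_n ≤ n, and for m ≥ 0 define J^(m) = Σ_{n≥0}(a_{n+m}(x)/n!)D^n. Then for any polynomials f and g: J(fg)(x) = Σ_{n≥0} J^(n)(f)(x) · g^(n)(x)/n! = Σ_{n≥0} J^(n)(g)(x) · f^(n)(x)/n!. -/

import Mathlib

open Polynomial Finset

private lemma tri8 {M : Type*} [AddCommMonoid M] (h : ℕ → ℕ → M) (N : ℕ)
    (hv : ∀ i j, N ≤ i + j → h i j = 0) :
    ∑ k ∈ range N, ∑ i ∈ range (k+1), h i (k-i) = ∑ i ∈ range N, ∑ j ∈ range N, h i j := by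
  have step1 : ∑ k ∈ range N, ∑ i ∈ range (k+1), h i (k-i)
      = ∑ p ∈ ((range N ×ˢ range N).filter (fun p => p.1 + p.2 < N)), h p.1 p.2 := by
    rw [Finset.sum_sigma']
    refine Finset.sum_nbij' (fun p => (p.2, p.1 - p.2)) (fun p => ⟨p.1 + p.2, p.1⟩) ?_ ?_ ?_ ?_ ?_
    · rintro ⟨k, i⟩ hp
      simp only [mem_sigma, mem_range] at hp
      simp only [mem_filter, mem_product, mem_range]
      omega
    · rintro ⟨i, j⟩ hp
      simp only [mem_filter, mem_product, mem_range] at hp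
      simp only [mem_sigma, mem_range]
      omega
    · rintro ⟨k, i⟩ hp
      simp only [mem_sigma, mem_range] at hp
      have : i + (k - i) = k := by omega
      simp [this]
    · rintro ⟨i, j⟩ hp; simp
    · rintro ⟨k, i⟩ hp; rfl
  rw [step1, ← Finset.sum_product']
  rw [← Finset.sum_filter_add_sum_filter_not (range N ×ˢ range N) (fun p => p.1 + p.2 < N)]
  have : ∑ p ∈ ((range N ×ˢ range N).filter (fun p => ¬ p.1 + p.2 < N)), h p.1 p.2 = 0 := by
    apply Finset.sum_eq_zero
    rintro ⟨i, j⟩ hp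
    simp only [mem_filter, mem_product, mem_range, not_lt] at hp
    exact hv i j hp.2
  rw [this, add_zero]

theorem stmt8 (a : ℕ → Polynomial ℂ) (hdeg : ∀ ν, (a ν).degree ≤ (ν : ℕ))
    (Jm : ℕ → Polynomial ℂ → Polynomial ℂ)
    (hJm : ∀ m p, Jm m p = ∑ n ∈ Finset.range (p.natDegree + 1),
        ((Nat.factorial n : ℂ))⁻¹ • (a (n + m) * Polynomial.derivative^[n] p))
    (f g : Polynomial ℂ) :
    Jm 0 (f * g) = (∑ n ∈ Finset.range (g.natDegree + 1),
        ((Nat.factorial n : ℂ))⁻¹ • (Jm n f * Polynomial.derivative^[n] g)) ∧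
    Jm 0 (f * g) = (∑ n ∈ Finset.range (f.natDegree + 1),
        ((Nat.factorial n : ℂ))⁻¹ • (Jm n g * Polynomial.derivative^[n] f)) := by
  set N := f.natDegree + g.natDegree + 1 with hN
  set c : ℕ → ℕ → Polynomial ℂ := fun i j =>
    ((Nat.factorial i : ℂ))⁻¹ • ((Nat.factorial j : ℂ))⁻¹ •
      (a (i + j) * (Polynomial.derivative^[i] f * Polynomial.derivative^[j] g)) with hc
  -- vanishing of c
  have hc0 : ∀ i j, f.natDegree < i ∨ g.natDegree < j → c i j = 0 := by
    intro i j h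
    rcases h with h | h
    · rw [hc]; simp [Polynomial.iterate_derivative_eq_zero h]
    · rw [hc]; simp [Polynomial.iterate_derivative_eq_zero h]
  have hfac : ∀ n : ℕ, ((Nat.factorial n : ℂ)) ≠ 0 := by
    intro n
    exact_mod_cast Nat.cast_ne_zero.mpr (Nat.factorial_ne_zero n)
  -- LHS equals double sum over N × N
  have hLHS : Jm 0 (f * g) = ∑ i ∈ range N, ∑ j ∈ range N, c i j := by
    rw [hJm]
    rw [← tri8 c N (fun i j hij => hc0 i j (by omega))]
    have hsub : range ((f * g).natDegree + 1) ⊆ range N := by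
      apply Finset.range_subset_range.mpr
      have := Polynomial.natDegree_mul_le (p := f) (q := g)
      omega
    rw [Finset.sum_subset hsub]
    · apply Finset.sum_congr rfl
      intro k hk
      rw [Polynomial.iterate_derivative_mul, Finset.mul_sum, Finset.smul_sum,
        ← Finset.sum_range_reflect]
      apply Finset.sum_congr rfl
      intro j hj
      simp only [mem_range] at hj
      have hjk : j ≤ k := by omega
      have h1 : k - (k - j) = j := by omega
      have h2 : k - j + j = k := by omega
      rw [hc]
      simp only [h1]
      have hkey : ((Nat.factorial k : ℂ))⁻¹ * (k.choose j : ℂ)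
          = ((Nat.factorial (k - j) : ℂ))⁻¹ * ((Nat.factorial j : ℂ))⁻¹ := by
        have := Nat.choose_mul_factorial_mul_factorial hjk
        have hcast : (k.choose j : ℂ) * (Nat.factorial j : ℂ) * (Nat.factorial (k - j) : ℂ)
            = (Nat.factorial k : ℂ) := by exact_mod_cast this
        field_simp [hfac k, hfac j, hfac (k - j)]
        linear_combination hcast
      simp only [Nat.succ_sub_one, h1, Nat.choose_symm hjk, h2, add_zero]
      have h3 : j + (k - j) = k := by omega
      rw [← Nat.cast_smul_eq_nsmul ℂ, mul_smul_comm, smul_smul, smul_smul, h3, hkey,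
        mul_comm ((Nat.factorial (k - j) : ℂ))⁻¹]
    · intro k _ hk
      simp only [mem_range, not_lt] at hk
      have : (f * g).natDegree < k := by omega
      rw [Polynomial.iterate_derivative_eq_zero this]
      simp
  -- first RHS
  have hR1 : (∑ n ∈ Finset.range (g.natDegree + 1),
      ((Nat.factorial n : ℂ))⁻¹ • (Jm n f * Polynomial.derivative^[n] g))
      = ∑ i ∈ range N, ∑ j ∈ range N, c i j := by
    have step : ∀ n, ((Nat.factorial n : ℂ))⁻¹ • (Jm n f * Polynomial.derivative^[n] g)
        = ∑ i ∈ range (f.natDegree + 1), c i n := by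
      intro n
      rw [hJm, Finset.sum_mul, Finset.smul_sum]
      apply Finset.sum_congr rfl
      intro i _
      rw [hc]
      rw [smul_mul_assoc, smul_comm, mul_assoc]
    calc (∑ n ∈ Finset.range (g.natDegree + 1),
        ((Nat.factorial n : ℂ))⁻¹ • (Jm n f * Polynomial.derivative^[n] g))
        = ∑ n ∈ range (g.natDegree + 1), ∑ i ∈ range (f.natDegree + 1), c i n := by
          exact Finset.sum_congr rfl fun n _ => step n
      _ = ∑ i ∈ range (f.natDegree + 1), ∑ n ∈ range (g.natDegree + 1), c i n :=
          Finset.sum_comm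
      _ = ∑ i ∈ range N, ∑ j ∈ range N, c i j := by
          rw [Finset.sum_subset (Finset.range_subset_range.mpr (by omega : f.natDegree + 1 ≤ N))]
          · apply Finset.sum_congr rfl
            intro i _
            rw [Finset.sum_subset (Finset.range_subset_range.mpr (by omega : g.natDegree + 1 ≤ N))]
            intro j _ hj
            simp only [mem_range, not_lt] at hj
            exact hc0 i j (Or.inr (by omega))
          · intro i _ hi
            simp only [mem_range, not_lt] at hi
            exact Finset.sum_eq_zero fun j _ => hc0 i j (Or.inl (by omega))
  -- second RHS
  have hR2 : (∑ n ∈ Finset.range (f.natDegree + 1),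
      ((Nat.factorial n : ℂ))⁻¹ • (Jm n g * Polynomial.derivative^[n] f))
      = ∑ i ∈ range N, ∑ j ∈ range N, c i j := by
    have step : ∀ n, ((Nat.factorial n : ℂ))⁻¹ • (Jm n g * Polynomial.derivative^[n] f)
        = ∑ j ∈ range (g.natDegree + 1), c n j := by
      intro n
      rw [hJm, Finset.sum_mul, Finset.smul_sum]
      apply Finset.sum_congr rfl
      intro j _
      rw [hc]
      rw [smul_mul_assoc, smul_comm, mul_assoc, add_comm j n, smul_comm,
        mul_comm (Polynomial.derivative^[j] g)]
    calc (∑ n ∈ Finset.range (f.natDegree + 1),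
        ((Nat.factorial n : ℂ))⁻¹ • (Jm n g * Polynomial.derivative^[n] f))
        = ∑ n ∈ range (f.natDegree + 1), ∑ j ∈ range (g.natDegree + 1), c n j := by
          exact Finset.sum_congr rfl fun n _ => step n
      _ = ∑ i ∈ range N, ∑ j ∈ range N, c i j := by
          rw [Finset.sum_subset (Finset.range_subset_range.mpr (by omega : f.natDegree + 1 ≤ N))]
          · apply Finset.sum_congr rfl
            intro i _
            rw [Finset.sum_subset (Finset.range_subset_range.mpr (by omega : g.natDegree + 1 ≤ N))]
            intro j _ hj
            simp only [mem_range, not_lt] at hj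
            exact hc0 i j (Or.inr (by omega))
          · intro i _ hi
            simp only [mem_range, not_lt] at hi
            exact Finset.sum_eq_zero fun j _ => hc0 i j (Or.inl (by omega))
  exact ⟨hLHS.trans hR1.symm, hLHS.trans hR2.symm⟩
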